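/- arXiv:1903.05243 — 2 statements merged into one kernel-verified Lean document; each statement's English description precedes it below -/
import Mathlib

section
/- Let k, j be integers with 0 ≤ j and j + 2 ≤ k + 1, and let ρ > 0 be a real number satisfying 1 − 4(k−j)ρ² − 2ρ > 0. Define the real sequence (a_i) by a_{j+2} = 1 − 4(k−j−1)ρ² − 2ρ and a_{i+1} = 1 − 4(k−i)ρ² − 2ρ + 2ρ√(a_i) for j+2 ≤ i ≤ k. Then a_{j+2} > 0 and a_{i+1} > a_i + 4ρ² for all j+2 ≤ i ≤ k; in particular all a_i (j+2 ≤ i ≤ k+1) are positive and the sequence is strictly increasing. -/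
open Filter

/-- Lambda-terms in De Bruijn notation. -/
inductive LTerm : Type
  | var : ℕ → LTerm
  | app : LTerm → LTerm → LTerm
  | lam : LTerm → LTerm

namespace LTerm

/-- The size of a term: its total number of nodes. -/
def size : LTerm → ℕ
  | var _ => 1
  | app s t => size s + size t + 1
  | lam t => size t + 1

/-- The number of variables (leaves) of a term. -/
def nvar : LTerm → ℕ
  | var _ => 1
  | app s t => nvar s + nvar t
  | lam t => nvar t

/-- Closedness with all De Bruijn indices at most `k`: under `d` enclosing
abstractions a variable `n` satisfies `1 ≤ n ≤ min d k`. -/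
def okIdx (k : ℕ) : ℕ → LTerm → Prop
  | d, var n => 1 ≤ n ∧ n ≤ d ∧ n ≤ k
  | d, app s t => okIdx k d s ∧ okIdx k d t
  | d, lam t => okIdx k (d + 1) t

/-- Closedness with at most `k` De Bruijn levels: at most `k` abstractions on
every root-to-leaf path, and a variable `n` under `d` abstractions satisfies
`1 ≤ n ≤ d`. -/
def okLev (k : ℕ) : ℕ → LTerm → Prop
  | d, var n => 1 ≤ n ∧ n ≤ d
  | d, app s t => okLev k d s ∧ okLev k d t
  | d, lam t => d < k ∧ okLev k (d + 1) t

/-- Number of variables at De Bruijn level `m` (current depth `d`). -/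
def nvarAt (m : ℕ) : ℕ → LTerm → ℕ
  | d, var _ => if d = m then 1 else 0
  | d, app s t => nvarAt m d s + nvarAt m d t
  | d, lam t => nvarAt m (d + 1) t

/-- Number of abstraction (unary) nodes at De Bruijn level `m`. -/
def nlamAt (m : ℕ) : ℕ → LTerm → ℕ
  | _, var _ => 0
  | d, app s t => nlamAt m d s + nlamAt m d t
  | d, lam t => (if d = m then 1 else 0) + nlamAt m (d + 1) t

/-- Number of application (binary) nodes at De Bruijn level `m`. -/
def nappAt (m : ℕ) : ℕ → LTerm → ℕ
  | _, var _ => 0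
  | d, app s t => (if d = m then 1 else 0) + nappAt m d s + nappAt m d t
  | d, lam t => nappAt m (d + 1) t

end LTerm

/-- The set of terms of `Λ_k` (closed, all De Bruijn indices at most `k`) of size `n`. -/
def LamIdx (k n : ℕ) : Set LTerm := {t | t.size = n ∧ LTerm.okIdx k 0 t}

/-- `T_n`: the number of terms of `Λ_k` of size `n`. -/
noncomputable def TIdx (k n : ℕ) : ℕ := (LamIdx k n).ncard

/-- `E[X_n]` for a uniformly random term of `Λ_k` of size `n`. -/
noncomputable def EIdx (k n : ℕ) : ℝ :=
  (∑ᶠ t ∈ LamIdx k n, (LTerm.nvar t : ℝ)) / (TIdx k n : ℝ)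

/-- `Var[X_n]` for a uniformly random term of `Λ_k` of size `n`. -/
noncomputable def VarIdx (k n : ℕ) : ℝ :=
  (∑ᶠ t ∈ LamIdx k n, ((LTerm.nvar t : ℝ) - EIdx k n) ^ 2) / (TIdx k n : ℝ)

/-- The set of terms of `H_k` (closed, at most `k` De Bruijn levels) of size `n`. -/
def LamLev (k n : ℕ) : Set LTerm := {t | t.size = n ∧ LTerm.okLev k 0 t}

/-- `T_n`: the number of terms of `H_k` of size `n`. -/
noncomputable def TLev (k n : ℕ) : ℕ := (LamLev k n).ncard

/-- The auxiliary sequence `u_0 = 0`, `u_{i+1} = u_i² + i + 1`. -/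
def useq : ℕ → ℕ
  | 0 => 0
  | i + 1 => (useq i) ^ 2 + i + 1

/-- The auxiliary sequence `N_i = u_i² − u_i + i`. -/
def Nseq (i : ℕ) : ℕ := (useq i) ^ 2 - useq i + i

/-- Average number of variables at De Bruijn level `m` over the terms of `H_k`
of size `n`. -/
noncomputable def avgVarLev (k m n : ℕ) : ℝ :=
  (∑ᶠ t ∈ LamLev k n, (LTerm.nvarAt m 0 t : ℝ)) / (TLev k n : ℝ)

/-- Average number of abstraction (unary) nodes at De Bruijn level `m` over the
terms of `H_k` of size `n`. -/
noncomputable def avgLamLev (k m n : ℕ) : ℝ :=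
  (∑ᶠ t ∈ LamLev k n, (LTerm.nlamAt m 0 t : ℝ)) / (TLev k n : ℝ)

/-- Average number of application (binary) nodes at De Bruijn level `m` over the
terms of `H_k` of size `n`. -/
noncomputable def avgAppLev (k m n : ℕ) : ℝ :=
  (∑ᶠ t ∈ LamLev k n, (LTerm.nappAt m 0 t : ℝ)) / (TLev k n : ℝ)

/-- Positivity and monotonicity of the constants `a_i` in the
expansions of the outer radicands: with `a_{j+2} = 1 − 4(k−j−1)ρ² − 2ρ` and
`a_{i+1} = 1 − 4(k−i)ρ² − 2ρ + 2ρ√(a_i)` for `j+2 ≤ i ≤ k`, one has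
`a_{j+2} > 0`, `a_{i+1} > a_i + 4ρ²`; in particular all `a_i` are positive
and the sequence is strictly increasing. -/
theorem aseq_pos_and_increasing (k j : ℕ) (hjk : j + 1 ≤ k) (ρ : ℝ) (hρ : 0 < ρ)
    (hpos : 0 < 1 - 4 * ((k - j : ℕ) : ℝ) * ρ ^ 2 - 2 * ρ)
    (a : ℕ → ℝ)
    (hbase : a (j + 2) = 1 - 4 * ((k - j - 1 : ℕ) : ℝ) * ρ ^ 2 - 2 * ρ)
    (hrec : ∀ i : ℕ, j + 2 ≤ i → i ≤ k →
      a (i + 1) = 1 - 4 * ((k - i : ℕ) : ℝ) * ρ ^ 2 - 2 * ρ + 2 * ρ * Real.sqrt (a i)) :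
    0 < a (j + 2) ∧
    (∀ i : ℕ, j + 2 ≤ i → i ≤ k → a i + 4 * ρ ^ 2 < a (i + 1)) ∧
    (∀ i : ℕ, j + 2 ≤ i → i ≤ k + 1 → 0 < a i) ∧
    (∀ i₁ i₂ : ℕ, j + 2 ≤ i₁ → i₁ < i₂ → i₂ ≤ k + 1 → a i₁ < a i₂) := by
  have hbase0 : 0 < a (j + 2) := by
    rw [hbase]
    have h1 : ((k - j : ℕ) : ℝ) = ((k - j - 1 : ℕ) : ℝ) + 1 := by
      have h : k - j = (k - j - 1) + 1 := by omega
      rw [h]; push_cast; ring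
    nlinarith [sq_nonneg ρ]
  have key : ∀ n : ℕ, j + 2 + n ≤ k + 1 →
      0 < a (j + 2 + n) ∧
        (j + 2 + n ≤ k → a (j + 2 + n) + 4 * ρ ^ 2 < a (j + 2 + n + 1)) := by
    intro n
    induction n with
    | zero =>
      intro _
      refine ⟨hbase0, fun hk => ?_⟩
      have hr := hrec (j + 2) le_rfl hk
      have hs : 0 < Real.sqrt (a (j + 2)) := Real.sqrt_pos.mpr hbase0
      have hc : ((k - (j + 2) : ℕ) : ℝ) = ((k - j - 1 : ℕ) : ℝ) - 1 := by
        have h : k - j - 1 = (k - (j + 2)) + 1 := by omega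
        rw [h]; push_cast; ring
      have hmul : 0 < 2 * ρ * Real.sqrt (a (j + 2)) := by positivity
      show a (j + 2) + 4 * ρ ^ 2 < a (j + 2 + 1)
      rw [hr, hc]
      nlinarith [hbase]
    | succ n ih =>
      intro hle
      have hik : j + 2 + n ≤ k := by omega
      obtain ⟨hpos', hmono⟩ := ih (by omega)
      have hm := hmono hik
      have hposS : 0 < a (j + 2 + n + 1) := by nlinarith [sq_nonneg ρ]
      refine ⟨hposS, fun hk2 => ?_⟩
      set i := j + 2 + n with hi
      have hr1 := hrec i (by omega) hik
      have hr2 := hrec (i + 1) (by omega) (by omega)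
      have hc : ((k - (i + 1) : ℕ) : ℝ) = ((k - i : ℕ) : ℝ) - 1 := by
        have h : k - i = (k - (i + 1)) + 1 := by omega
        rw [h]; push_cast; ring
      have hlt : a i < a (i + 1) := by nlinarith [sq_nonneg ρ]
      have hsq : Real.sqrt (a i) < Real.sqrt (a (i + 1)) :=
        Real.sqrt_lt_sqrt (le_of_lt hpos') hlt
      have hmul : 0 < 2 * ρ * (Real.sqrt (a (i + 1)) - Real.sqrt (a i)) := by
        have := sub_pos.mpr hsq
        positivity
      show a (i + 1) + 4 * ρ ^ 2 < a (i + 1 + 1)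
      rw [hr2, hc]
      nlinarith [hr1]
  have hmono : ∀ i : ℕ, j + 2 ≤ i → i ≤ k → a i + 4 * ρ ^ 2 < a (i + 1) := by
    intro i h1 h2
    have h := (key (i - (j + 2)) (by omega)).2 (by omega)
    have e : j + 2 + (i - (j + 2)) = i := by omega
    rwa [e] at h
  have hposAll : ∀ i : ℕ, j + 2 ≤ i → i ≤ k + 1 → 0 < a i := by
    intro i h1 h2
    have h := (key (i - (j + 2)) (by omega)).1
    have e : j + 2 + (i - (j + 2)) = i := by omega
    rwa [e] at h
  refine ⟨hbase0, hmono, hposAll, ?_⟩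
  have hstep : ∀ i : ℕ, j + 2 ≤ i → i ≤ k → a i < a (i + 1) := by
    intro i h1 h2
    have := hmono i h1 h2
    nlinarith [sq_nonneg ρ]
  intro i₁ i₂ h1 h2 h3
  induction i₂ with
  | zero => omega
  | succ m ih =>
    rcases Nat.lt_or_ge i₁ m with h | h
    · have hm : a i₁ < a m := ih h (by omega)
      have : a m < a (m + 1) := hstep m (by omega) (by omega)
      linarith
    · have : i₁ = m := by omega
      subst this
      exact hstep i₁ (by omega) (by omega)
end

section
/- Fix an integer k ≥ 1 and define real functions R_i (1 ≤ i ≤ k+1) by R_1(z) = 1 − 4kz² and R_{i+1}(z) = 1 − 4(k−i)z² − 2z + 2z√(R_i(z)) for 1 ≤ i ≤ k. Let z > 0 and let 1 ≤ m ≤ k+1 be such that R_i(z) > 0 for all 1 ≤ i < m. Then R_m(z) < 1, and R_m is differentiable at z with negative derivative, i.e., there exists r < 0 such that R_m has derivative r at z. -/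
open Filter

/-- The nested radicands `R_1(z) = 1 − 4kz²`,
`R_{i+1}(z) = 1 − 4(k−i)z² − 2z + 2z√(R_i(z))`. -/
noncomputable def Rfun (k : ℕ) : ℕ → ℝ → ℝ
  | 0, _ => 1
  | 1, z => 1 - 4 * k * z ^ 2
  | i + 2, z => 1 - 4 * ((k - (i + 1) : ℕ) : ℝ) * z ^ 2 - 2 * z
      + 2 * z * Real.sqrt (Rfun k (i + 1) z)

/-- For `k ≥ 1`, `z > 0` and `1 ≤ m ≤ k+1` such that
`R_i(z) > 0` for all `1 ≤ i < m`, one has `R_m(z) < 1` and `R_m` is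
differentiable at `z` with negative derivative. -/
theorem radicand_lt_one_and_deriv_neg (k : ℕ) (hk : 1 ≤ k) (z : ℝ) (hz : 0 < z)
    (m : ℕ) (hm1 : 1 ≤ m) (hm2 : m ≤ k + 1)
    (hpos : ∀ i : ℕ, 1 ≤ i → i < m → 0 < Rfun k i z) :
    Rfun k m z < 1 ∧ ∃ r : ℝ, r < 0 ∧ HasDerivAt (Rfun k m) r z := by
  induction m with
  | zero => omega
  | succ n ih =>
    cases n with
    | zero =>
      have heq : Rfun k 1 = fun y : ℝ => 1 - 4 * (k : ℝ) * y ^ 2 := rfl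
      have hk' : (1 : ℝ) ≤ (k : ℝ) := by exact_mod_cast hk
      constructor
      · rw [heq]
        show 1 - 4 * (k : ℝ) * z ^ 2 < 1
        nlinarith [sq_nonneg z]
      · refine ⟨-(4 * (k : ℝ) * (2 * z)), by nlinarith, ?_⟩
        rw [heq]
        have h1 : HasDerivAt (fun y : ℝ => 4 * (k : ℝ) * y ^ 2) (4 * (k : ℝ) * (2 * z)) z := by
          simpa using (hasDerivAt_pow 2 z).const_mul (4 * (k : ℝ))
        simpa using h1.const_sub 1
    | succ i =>
      have hRpos : 0 < Rfun k (i + 1) z := hpos (i + 1) (by omega) (by omega)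
      obtain ⟨hlt, r, hr, hd⟩ := ih (by omega) (by omega)
        (fun j hj1 hj2 => hpos j hj1 (by omega))
      set s := Real.sqrt (Rfun k (i + 1) z) with hs
      have hspos : 0 < s := Real.sqrt_pos.mpr hRpos
      have hslt : s < 1 := by
        rw [hs, show (1:ℝ) = Real.sqrt 1 from Real.sqrt_one.symm]
        exact Real.sqrt_lt_sqrt hRpos.le (by simpa using hlt)
      set c : ℝ := ((k - (i + 1) : ℕ) : ℝ) with hc
      have hcnn : 0 ≤ c := Nat.cast_nonneg _
      have heq : Rfun k (i + 2)
          = fun y : ℝ => 1 - 4 * c * y ^ 2 - 2 * y + 2 * y * Real.sqrt (Rfun k (i + 1) y) := rfl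
      constructor
      · rw [heq]
        show 1 - 4 * c * z ^ 2 - 2 * z + 2 * z * Real.sqrt (Rfun k (i + 1) z) < 1
        rw [← hs]
        nlinarith [sq_nonneg z]
      · refine ⟨-(4 * c * (2 * z)) - 2 + (2 * s + 2 * z * (r / (2 * s))), ?_, ?_⟩
        · have h3 : z * r / s < 0 := div_neg_of_neg_of_pos (by nlinarith) hspos
          have : 2 * z * (r / (2 * s)) = z * r / s := by
            field_simp
          nlinarith
        · rw [heq]
          have hsq : HasDerivAt (fun y => Real.sqrt (Rfun k (i + 1) y)) (r / (2 * s)) z :=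
            hd.sqrt (ne_of_gt hRpos)
          have h1 : HasDerivAt (fun y : ℝ => 4 * c * y ^ 2) (4 * c * (2 * z)) z := by
            simpa using (hasDerivAt_pow 2 z).const_mul (4 * c)
          have h2 : HasDerivAt (fun y : ℝ => 2 * y) 2 z := by
            simpa using (hasDerivAt_id z).const_mul 2
          have h4 : HasDerivAt (fun y : ℝ => 2 * y * Real.sqrt (Rfun k (i + 1) y))
              (2 * s + 2 * z * (r / (2 * s))) z := by
            have := h2.mul hsq
            exact this
          exact ((h1.const_sub 1).sub h2).add h4
end
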